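/- Let L be a closed linear relation in a Banach space X satisfying the ω-dissipativity condition ‖y - λx‖ ≥ (λ - ω)‖x‖ for all (x,y) ∈ L and λ > ω, and suppose L - λ₀ is surjective for some λ₀ > ω. Then (ω, ∞) ⊆ ρ(L), i.e., L - λ is bijective with bounded inverse for every λ > ω. -/
import Mathlib


/-- An `ω`-dissipative closed linear relation with `L - λ₀` surjective for some `λ₀ > ω`
has `(ω, ∞)` in its resolvent set: `L - λ` is bijective with a bounded inverse for all
`λ > ω`. -/
theorem omega_dissipative_resolvent_halfline
    {X : Type*} [NormedAddCommGroup X] [NormedSpace ℂ X] [CompleteSpace X]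
    (L : Submodule ℂ (X × X)) (hL : IsClosed (L : Set (X × X))) (ω : ℝ)
    (hdiss : ∀ p ∈ L, ∀ t : ℝ, ω < t → (t - ω) * ‖p.1‖ ≤ ‖p.2 - (t : ℂ) • p.1‖)
    (hsurj : ∃ l₀ : ℝ, ω < l₀ ∧ ∀ z : X, ∃ p ∈ L, p.2 - (l₀ : ℂ) • p.1 = z) :
    ∀ t : ℝ, ω < t →
      (∀ p ∈ L, p.2 - (t : ℂ) • p.1 = 0 → p.1 = 0) ∧
      (∀ z : X, ∃ p ∈ L, p.2 - (t : ℂ) • p.1 = z) ∧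
      (∃ Rt : X →L[ℂ] X, ∀ p ∈ L, Rt (p.2 - (t : ℂ) • p.1) = p.1) := by
  classical
  obtain ⟨l₀, hl₀, hs₀⟩ := hsurj
  haveI : Nonempty X := ⟨0⟩
  -- a pair with zero image is zero
  have huniq0 : ∀ t : ℝ, ω < t → ∀ p ∈ L, p.2 - (t : ℂ) • p.1 = 0 → p = 0 := by
    intro t ht p hp h0
    have h1 : (t - ω) * ‖p.1‖ ≤ ‖p.2 - (t : ℂ) • p.1‖ := hdiss p hp t ht
    rw [h0, norm_zero] at h1
    have h2 : p.1 = 0 := by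
      have : ‖p.1‖ ≤ 0 := by nlinarith [norm_nonneg p.1]
      simpa [norm_le_zero_iff] using this
    have h3 : p.2 = 0 := by
      have := sub_eq_zero.mp h0
      rw [this, h2, smul_zero]
    exact Prod.ext h2 h3
  -- uniqueness of preimages
  have huniq : ∀ t : ℝ, ω < t → ∀ p ∈ L, ∀ q ∈ L,
      p.2 - (t : ℂ) • p.1 = q.2 - (t : ℂ) • q.1 → p = q := by
    intro t ht p hp q hq he
    have hmem : p - q ∈ L := sub_mem hp hq
    have h0 : (p - q).2 - (t : ℂ) • (p - q).1 = 0 := by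
      simp only [Prod.snd_sub, Prod.fst_sub, smul_sub]
      rw [sub_eq_zero]
      have : p.2 - (t : ℂ) • p.1 = q.2 - (t : ℂ) • q.1 := he
      abel_nf
      abel_nf at this
      linear_combination (norm := abel_nf) this
    have := huniq0 t ht (p - q) hmem h0
    exact sub_eq_zero.mp this
  -- propagation of surjectivity
  have hstep : ∀ t : ℝ, ω < t → (∀ z : X, ∃ p ∈ L, p.2 - (t : ℂ) • p.1 = z) →
      ∀ s : ℝ, |s - t| < t - ω → (∀ z : X, ∃ p ∈ L, p.2 - (s : ℂ) • p.1 = z) := by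
    intro t ht hst s hs z
    set c : X → X × X := fun w => Classical.choose (hst w) with hc
    have hcm : ∀ w, c w ∈ L := fun w => (Classical.choose_spec (hst w)).1
    have hce : ∀ w, (c w).2 - (t : ℂ) • (c w).1 = w :=
      fun w => (Classical.choose_spec (hst w)).2
    set f : X → X := fun x => (c (z + ((s : ℂ) - t) • x)).1 with hf
    have hlip : ∀ x y : X, ‖f x - f y‖ ≤ (|s - t| / (t - ω)) * ‖x - y‖ := by
      intro x y
      set p := c (z + ((s : ℂ) - t) • x)
      set q := c (z + ((s : ℂ) - t) • y)
      have hmem : p - q ∈ L := sub_mem (hcm _) (hcm _)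
      have him : (p - q).2 - (t : ℂ) • (p - q).1 = ((s : ℂ) - t) • (x - y) := by
        simp only [Prod.snd_sub, Prod.fst_sub, smul_sub]
        have h1 := hce (z + ((s : ℂ) - t) • x)
        have h2 := hce (z + ((s : ℂ) - t) • y)
        have : (p.2 - (t : ℂ) • p.1) - (q.2 - (t : ℂ) • q.1)
            = ((s : ℂ) - t) • x - ((s : ℂ) - t) • y := by
          rw [h1, h2]; abel
        rw [← this]; abel
      have hb := hdiss (p - q) hmem t ht
      rw [him] at hb
      have hn : ‖((s : ℂ) - t) • (x - y)‖ = |s - t| * ‖x - y‖ := by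
        rw [norm_smul]
        congr 1
        rw [show ((s : ℂ) - t) = ((s - t : ℝ) : ℂ) by push_cast; ring]
        exact Complex.norm_real _ ▸ Real.norm_eq_abs _
      rw [hn] at hb
      have hfxy : f x - f y = (p - q).1 := by simp [hf, p, q]
      rw [hfxy]
      rw [div_mul_eq_mul_div, le_div_iff₀ (by linarith)]
      nlinarith [hb]
    set K : NNReal := Real.toNNReal (|s - t| / (t - ω)) with hK
    have hKlt : K < 1 := by
      rw [hK, ← Real.toNNReal_one, Real.toNNReal_lt_toNNReal_iff (by norm_num)]
      rw [div_lt_one (by linarith)]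
      exact hs
    have hcontr : ContractingWith K f := by
      refine ⟨hKlt, LipschitzWith.of_dist_le_mul fun x y => ?_⟩
      rw [dist_eq_norm, dist_eq_norm]
      have : (K : ℝ) = |s - t| / (t - ω) := by
        rw [hK, Real.coe_toNNReal _ (div_nonneg (abs_nonneg _) (by linarith))]
      rw [this]
      exact hlip x y
    set x := ContractingWith.fixedPoint f hcontr with hxdef
    have hx : f x = x := hcontr.fixedPoint_isFixedPt
    refine ⟨c (z + ((s : ℂ) - t) • x), hcm _, ?_⟩
    have h1 : (c (z + ((s : ℂ) - t) • x)).1 = x := hx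
    have h2 := hce (z + ((s : ℂ) - t) • x)
    rw [h1] at h2 ⊢
    rw [eq_add_of_sub_eq h2, sub_smul]
    abel
  -- surjectivity along the sequence tₙ = ω + (3/2)ⁿ (l₀ - ω)
  have hiter : ∀ n : ℕ,
      ∀ z : X, ∃ p ∈ L, p.2 - ((ω + (3/2) ^ n * (l₀ - ω) : ℝ) : ℂ) • p.1 = z := by
    intro n
    induction n with
    | zero =>
      intro z
      have hω : (ω + (3/2:ℝ) ^ 0 * (l₀ - ω)) = l₀ := by ring
      rw [hω]
      exact hs₀ z
    | succ n ih =>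
      have hpos : (0:ℝ) < (3/2) ^ n * (l₀ - ω) :=
        mul_pos (pow_pos (by norm_num) n) (by linarith)
      refine hstep (ω + (3/2) ^ n * (l₀ - ω)) (by linarith) ih _ ?_
      have : (ω + (3/2) ^ (n+1) * (l₀ - ω)) - (ω + (3/2) ^ n * (l₀ - ω))
          = (1/2) * ((3/2) ^ n * (l₀ - ω)) := by ring
      rw [this, abs_of_pos (by positivity)]
      linarith
  -- surjectivity everywhere on (ω, ∞)
  have hall : ∀ t : ℝ, ω < t → ∀ z : X, ∃ p ∈ L, p.2 - (t : ℂ) • p.1 = z := by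
    intro t ht
    obtain ⟨n, hn⟩ := pow_unbounded_of_one_lt ((t - ω) / (l₀ - ω)) (by norm_num : (1:ℝ) < 3/2)
    have htn : t - ω < (3/2) ^ n * (l₀ - ω) := by
      rw [div_lt_iff₀ (by linarith)] at hn
      linarith
    have hpos : (0:ℝ) < (3/2) ^ n * (l₀ - ω) :=
      mul_pos (pow_pos (by norm_num) n) (by linarith)
    refine hstep (ω + (3/2) ^ n * (l₀ - ω)) (by linarith) (hiter n) t ?_
    rw [abs_lt]
    constructor <;> linarith
  -- assemble the answer
  intro t ht
  refine ⟨fun p hp h0 => congrArg Prod.fst (huniq0 t ht p hp h0), hall t ht, ?_⟩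
  set c : X → X × X := fun z => Classical.choose (hall t ht z) with hc
  have hcm : ∀ z, c z ∈ L := fun z => (Classical.choose_spec (hall t ht z)).1
  have hce : ∀ z, (c z).2 - (t : ℂ) • (c z).1 = z :=
    fun z => (Classical.choose_spec (hall t ht z)).2
  have hcu : ∀ z : X, ∀ p ∈ L, p.2 - (t : ℂ) • p.1 = z → c z = p := by
    intro z p hp he
    exact huniq t ht (c z) (hcm z) p hp (by rw [hce z, he])
  have hadd : ∀ z w : X, c (z + w) = c z + c w := by
    intro z w
    refine hcu (z + w) (c z + c w) (add_mem (hcm z) (hcm w)) ?_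
    simp only [Prod.snd_add, Prod.fst_add, smul_add]
    rw [show (c z).2 + (c w).2 - ((t : ℂ) • (c z).1 + (t : ℂ) • (c w).1)
        = ((c z).2 - (t : ℂ) • (c z).1) + ((c w).2 - (t : ℂ) • (c w).1) by abel]
    rw [hce z, hce w]
  have hsmul : ∀ (a : ℂ) (z : X), c (a • z) = a • c z := by
    intro a z
    refine hcu (a • z) (a • c z) (L.smul_mem a (hcm z)) ?_
    simp only [Prod.smul_snd, Prod.smul_fst]
    rw [smul_comm (t : ℂ) a, ← smul_sub, hce z]
  set g : X →ₗ[ℂ] X :=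
    { toFun := fun z => (c z).1
      map_add' := fun z w => by
        show (c (z + w)).1 = (c z).1 + (c w).1
        rw [hadd]; rfl
      map_smul' := fun a z => by
        show (c (a • z)).1 = a • (c z).1
        rw [hsmul]; rfl } with hg
  have hgb : ∀ z : X, ‖g z‖ ≤ (t - ω)⁻¹ * ‖z‖ := by
    intro z
    have hb := hdiss (c z) (hcm z) t ht
    rw [hce z] at hb
    have : g z = (c z).1 := rfl
    rw [this, inv_mul_eq_div, le_div_iff₀ (by linarith)]
    nlinarith [hb]
  refine ⟨g.mkContinuous ((t - ω)⁻¹) hgb, ?_⟩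
  intro p hp
  have : c (p.2 - (t : ℂ) • p.1) = p := hcu _ p hp rfl
  show (c (p.2 - (t : ℂ) • p.1)).1 = p.1
  rw [this]
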